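/- Almost sure ergodicity including the boundary factor: let U_n = exp(i·n^{−ζ/2}·G) where G is an m×m Hermitian matrix with |G_{ij}| ≥ ε₀ > 0 for all i, j, and suppose 0 < ζ ≤ 1 and 0 < p ≤ 1. Then for every s ≥ 0, the random matrix product Q_{σ_s} Q_{σ_{s+1}} ⋯ Q_{σ_{n_t−1}} W_{σ_{n_t}} converges to Π almost surely as t → ∞. -/

import Mathlib

open Matrix BigOperators MeasureTheory ProbabilityTheory Filter

/-- `Uprod U s t = U_t · U_{t-1} ⋯ U_{s+1}` (the identity if `t ≤ s`). -/
noncomputable def Uprod (m : ℕ) (U : ℕ → Matrix (Fin m) (Fin m) ℂ) (s : ℕ) :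
    ℕ → Matrix (Fin m) (Fin m) ℂ
  | 0 => 1
  | (t + 1) => if t + 1 ≤ s then 1 else U (t + 1) * Uprod m U s t

/-- The measurement times `σ_n = T_1 + ⋯ + T_n` (interarrival times indexed from `0`). -/
def sigmaT {Ω : Type*} (T : ℕ → Ω → ℕ) (n : ℕ) (ω : Ω) : ℕ :=
  ∑ k ∈ Finset.range n, T k ω

/-- `n_t = max {n ≥ 0 : σ_n ≤ t}` (the maximum is over `n ≤ t` since `σ_n ≥ n`). -/
def ntT {Ω : Type*} (T : ℕ → Ω → ℕ) (t : ℕ) (ω : Ω) : ℕ :=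
  Nat.findGreatest (fun n => sigmaT T n ω ≤ t) t

/-- The random transition matrix
`Q_{σ_n}(i,j) = |⟨j| U_{σ_n + T_{n+1}} ⋯ U_{σ_n + 1} |i⟩|²`. -/
noncomputable def Qmat {Ω : Type*} (m : ℕ) (U : ℕ → Matrix (Fin m) (Fin m) ℂ)
    (T : ℕ → Ω → ℕ) (n : ℕ) (ω : Ω) : Matrix (Fin m) (Fin m) ℝ :=
  Matrix.of fun i j => ‖(Uprod m U (sigmaT T n ω) (sigmaT T (n + 1) ω)) j i‖ ^ 2

/-- The boundary matrix `W_{σ_{n_t}}(i,j) = |⟨j| U_t ⋯ U_{σ_{n_t}+1} |i⟩|²`. -/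
noncomputable def Wmat {Ω : Type*} (m : ℕ) (U : ℕ → Matrix (Fin m) (Fin m) ℂ)
    (T : ℕ → Ω → ℕ) (t : ℕ) (ω : Ω) : Matrix (Fin m) (Fin m) ℝ :=
  Matrix.of fun i j => ‖(Uprod m U (sigmaT T (ntT T t ω) ω) t) j i‖ ^ 2


namespace Stmt14Helper

open Asymptotics

variable {m : ℕ}

noncomputable def EG (G : Matrix (Fin m) (Fin m) ℂ) (θ : ℝ) : Matrix (Fin m) (Fin m) ℂ :=
  NormedSpace.exp ((Complex.I * (θ : ℂ)) • G)

theorem EG_zero (G : Matrix (Fin m) (Fin m) ℂ) : EG G 0 = 1 := by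
  simp [EG, NormedSpace.exp_zero]

theorem EG_add (G : Matrix (Fin m) (Fin m) ℂ) (a b : ℝ) :
    EG G a * EG G b = EG G (a + b) := by
  rw [EG, EG, EG, ← Matrix.exp_add_of_commute]
  · congr 1
    rw [← add_smul]
    congr 1
    push_cast
    ring
  · exact ((Commute.refl G).smul_left _).smul_right _

theorem EG_conjT {G : Matrix (Fin m) (Fin m) ℂ} (hG : G.IsHermitian) (θ : ℝ) :
    (EG G θ)ᴴ = EG G (-θ) := by
  rw [EG, EG, ← Matrix.exp_conjTranspose]
  congr 1
  rw [conjTranspose_smul, hG.eq]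
  congr 1
  simp [Complex.ext_iff]

theorem EG_mul_star {G : Matrix (Fin m) (Fin m) ℂ} (hG : G.IsHermitian) (θ : ℝ) :
    EG G θ * (EG G θ)ᴴ = 1 := by
  rw [EG_conjT hG, EG_add, add_neg_cancel, EG_zero]

theorem EG_star_mul {G : Matrix (Fin m) (Fin m) ℂ} (hG : G.IsHermitian) (θ : ℝ) :
    (EG G θ)ᴴ * EG G θ = 1 := by
  rw [EG_conjT hG, EG_add, neg_add_cancel, EG_zero]

noncomputable def QE (G : Matrix (Fin m) (Fin m) ℂ) (θ : ℝ) : Matrix (Fin m) (Fin m) ℝ :=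
  Matrix.of fun i j => ‖EG G θ j i‖ ^ 2

theorem QE_nonneg (G : Matrix (Fin m) (Fin m) ℂ) (θ : ℝ) (i j : Fin m) :
    0 ≤ QE G θ i j := by
  simp only [QE, Matrix.of_apply]
  positivity

theorem QE_row_sum {G : Matrix (Fin m) (Fin m) ℂ} (hG : G.IsHermitian) (θ : ℝ) (i : Fin m) :
    ∑ j, QE G θ i j = 1 := by
  have h := EG_star_mul hG θ
  have h2 : ((EG G θ)ᴴ * EG G θ) i i = 1 := by rw [h]; simp [Matrix.one_apply]
  rw [Matrix.mul_apply] at h2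
  have h3 : ∀ j, (EG G θ)ᴴ i j * EG G θ j i = ((‖EG G θ j i‖ ^ 2 : ℝ) : ℂ) := by
    intro j
    rw [Matrix.conjTranspose_apply]
    rw [Complex.star_def, ← Complex.normSq_eq_conj_mul_self, Complex.normSq_eq_norm_sq]
  rw [Finset.sum_congr rfl (fun j _ => h3 j)] at h2
  rw [← Complex.ofReal_sum] at h2
  exact_mod_cast h2

theorem QE_col_sum {G : Matrix (Fin m) (Fin m) ℂ} (hG : G.IsHermitian) (θ : ℝ) (j : Fin m) :
    ∑ i, QE G θ i j = 1 := by
  have h := EG_mul_star hG θ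
  have h2 : (EG G θ * (EG G θ)ᴴ) j j = 1 := by rw [h]; simp [Matrix.one_apply]
  rw [Matrix.mul_apply] at h2
  have h3 : ∀ i, EG G θ j i * (EG G θ)ᴴ i j = ((‖EG G θ j i‖ ^ 2 : ℝ) : ℂ) := by
    intro i
    rw [Matrix.conjTranspose_apply]
    rw [Complex.star_def, Complex.mul_conj, Complex.normSq_eq_norm_sq]
  rw [Finset.sum_congr rfl (fun i _ => h3 i)] at h2
  rw [← Complex.ofReal_sum] at h2
  exact_mod_cast h2


/-- Entrywise little-o expansion of `exp (z • G)` at `z = 0`. -/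
theorem entry_littleO (G : Matrix (Fin m) (Fin m) ℂ) (i j : Fin m) :
    (fun z : ℂ => (NormedSpace.exp (z • G) : Matrix (Fin m) (Fin m) ℂ) i j
        - (1 : Matrix (Fin m) (Fin m) ℂ) i j - z * G i j) =o[nhds 0] (fun z => z) := by
  letI : SeminormedRing (Matrix (Fin m) (Fin m) ℂ) := Matrix.linftyOpSemiNormedRing
  letI : NormedRing (Matrix (Fin m) (Fin m) ℂ) := Matrix.linftyOpNormedRing
  letI : NormedAlgebra ℂ (Matrix (Fin m) (Fin m) ℂ) := Matrix.linftyOpNormedAlgebra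
  have hd := hasDerivAt_exp_smul_const (𝕂 := ℂ) G (0 : ℂ)
  simp only [zero_smul, NormedSpace.exp_zero, one_mul] at hd
  have hO := hasDerivAt_iff_isLittleO.1 hd
  simp only [sub_zero, zero_smul, NormedSpace.exp_zero, smul_eq_mul] at hO
  have hentry : ∀ M : Matrix (Fin m) (Fin m) ℂ, ‖M i j‖ ≤ ‖M‖ := by
    intro M
    have h1 : ‖M i j‖₊ ≤ ‖M‖₊ := by
      rw [Matrix.linfty_opNNNorm_def]
      exact le_trans (Finset.single_le_sum (f := fun j => ‖M i j‖₊)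
        (fun _ _ => zero_le) (Finset.mem_univ j))
        (Finset.le_sup (f := fun i => ∑ j, ‖M i j‖₊) (Finset.mem_univ i))
    exact_mod_cast h1
  refine IsBigO.trans_isLittleO (isBigO_of_le _ fun z => ?_) hO
  have : (NormedSpace.exp (z • G) : Matrix (Fin m) (Fin m) ℂ) i j
      - (1 : Matrix (Fin m) (Fin m) ℂ) i j - z * G i j
      = (NormedSpace.exp (z • G) - 1 - z • G) i j := by
    simp [Matrix.sub_apply, Matrix.smul_apply, smul_eq_mul]
  rw [this]
  exact hentry _

theorem exists_entry_lower (G : Matrix (Fin m) (Fin m) ℂ) {ε₀ : ℝ} (hε₀ : 0 < ε₀)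
    (hGlow : ∀ i j, ε₀ ≤ ‖G i j‖) :
    ∃ θ₀ c : ℝ, 0 < θ₀ ∧ θ₀ ≤ 1 ∧ 0 < c ∧
      ∀ θ : ℝ, 0 < θ → θ ≤ θ₀ → ∀ i j : Fin m,
        c * θ ^ 2 ≤ ‖EG G θ i j‖ ^ 2 := by
  have hpath : Tendsto (fun θ : ℝ => (Complex.I * (θ : ℂ))) (nhdsWithin 0 (Set.Ioi 0))
      (nhds (0 : ℂ)) := by
    have : Continuous fun θ : ℝ => (Complex.I * (θ : ℂ)) := by continuity
    have h0 := this.tendsto 0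
    simp only [Complex.ofReal_zero, mul_zero] at h0
    exact h0.mono_left nhdsWithin_le_nhds
  -- the eventual bound for each pair i j
  have key : ∀ i j : Fin m, ∀ᶠ θ : ℝ in nhdsWithin 0 (Set.Ioi 0),
      (if i = j then (1:ℝ)/2 else ε₀ / 2 * θ) ≤ ‖EG G θ i j‖ := by
    intro i j
    have hol := (entry_littleO G i j).comp_tendsto hpath
    have hb := hol.def (by positivity : (0:ℝ) < ε₀ / 2)
    have hmem : ∀ᶠ θ : ℝ in nhdsWithin 0 (Set.Ioi 0), θ ∈ Set.Ioi (0:ℝ) :=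
      self_mem_nhdsWithin
    have hpos : (0:ℝ) < 1 / (2 * (‖G i j‖ + ε₀ + 1)) := by
      have := hGlow i j; positivity
    have hsmall' : ∀ᶠ θ : ℝ in nhds (0:ℝ), θ < 1 / (2 * (‖G i j‖ + ε₀ + 1)) :=
      Iio_mem_nhds hpos
    have hsmall : ∀ᶠ θ : ℝ in nhdsWithin 0 (Set.Ioi 0),
        θ < 1 / (2 * (‖G i j‖ + ε₀ + 1)) := nhdsWithin_le_nhds hsmall'
    filter_upwards [hb, hmem, hsmall] with θ hθb hθpos hθsmall
    simp only [Function.comp] at hθb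
    rw [Set.mem_Ioi] at hθpos
    have hnorm : ‖Complex.I * (θ : ℂ)‖ = θ := by
      rw [norm_mul, Complex.norm_I, Complex.norm_real, one_mul, Real.norm_eq_abs,
        abs_of_pos hθpos]
    rw [hnorm] at hθb
    -- r = x - d - I θ g
    set x := (NormedSpace.exp ((Complex.I * (θ:ℂ)) • G) : Matrix (Fin m) (Fin m) ℂ) i j with hx
    set d := (1 : Matrix (Fin m) (Fin m) ℂ) i j with hd
    set g := G i j with hg
    have hxEG : ‖EG G θ i j‖ = ‖x‖ := rfl
    have hr : ‖x - d - Complex.I * (θ:ℂ) * g‖ ≤ ε₀ / 2 * θ := hθb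
    have hIg : ‖Complex.I * (θ:ℂ) * g‖ = θ * ‖g‖ := by
      rw [norm_mul, hnorm]
    have htri : ‖d + Complex.I * (θ:ℂ) * g‖ - ε₀ / 2 * θ ≤ ‖x‖ := by
      have h1 : ‖d + Complex.I * (θ:ℂ) * g‖ ≤ ‖x‖ + ‖x - d - Complex.I * (θ:ℂ) * g‖ := by
        have : d + Complex.I * (θ:ℂ) * g = x - (x - d - Complex.I * (θ:ℂ) * g) := by ring
        rw [this]
        exact norm_sub_le _ _
      linarith
    rw [hxEG]
    by_cases hij : i = j
    · subst hij
      rw [if_pos rfl]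
      have hd1 : ‖d‖ = 1 := by rw [hd, Matrix.one_apply_eq i, norm_one]
      have h2 : ‖d + Complex.I * (θ:ℂ) * g‖ ≥ 1 - θ * ‖g‖ := by
        have h3 : ‖d‖ - ‖Complex.I * (θ:ℂ) * g‖ ≤ ‖d + Complex.I * (θ:ℂ) * g‖ := by
          have h4 := norm_sub_norm_le d (-(Complex.I * (θ:ℂ) * g))
          simp only [norm_neg, sub_neg_eq_add] at h4
          exact h4
        rw [hd1, hIg] at h3
        linarith
      have ha : (0:ℝ) < ‖g‖ + ε₀ + 1 := by have := hGlow i i; rw [← hg] at this; positivity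
      have hb2 : θ * (‖g‖ + ε₀ + 1) ≤ 1/2 := by
        have h5 := hθsmall.le
        calc θ * (‖g‖ + ε₀ + 1) ≤ (1 / (2 * (‖g‖ + ε₀ + 1))) * (‖g‖ + ε₀ + 1) := by
              apply mul_le_mul_of_nonneg_right h5 ha.le
        _ = 1/2 := by field_simp
      nlinarith [hθpos.le, hε₀.le]
    · simp only [if_neg hij]
      have hd0 : d = 0 := Matrix.one_apply_ne' (by simpa [eq_comm] using hij)
      rw [hd0, zero_add, hIg] at htri
      have : ε₀ ≤ ‖g‖ := hGlow i j
      nlinarith [hθpos.le]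
  -- combine over all pairs and a bound θ ≤ 1
  have hone' : ∀ᶠ θ : ℝ in nhds (0:ℝ), θ < 1 := Iio_mem_nhds one_pos
  have hone'' : ∀ᶠ θ : ℝ in nhdsWithin 0 (Set.Ioi 0), θ < 1 := nhdsWithin_le_nhds hone'
  have hone : ∀ᶠ θ : ℝ in nhdsWithin 0 (Set.Ioi 0), θ ≤ 1 := hone''.mono fun _ h => h.le
  have hall : ∀ᶠ θ : ℝ in nhdsWithin 0 (Set.Ioi 0),
      θ ≤ 1 ∧ ∀ i j : Fin m, (if i = j then (1:ℝ)/2 else ε₀ / 2 * θ) ≤ ‖EG G θ i j‖ :=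
    hone.and (eventually_all.2 fun i => eventually_all.2 fun j => key i j)
  rw [Filter.Eventually, mem_nhdsGT_iff_exists_Ioc_subset] at hall
  obtain ⟨u, hu, hsub⟩ := hall
  rw [Set.mem_Ioi] at hu
  refine ⟨min u 1, min (ε₀^2/4) (1/4), by positivity, min_le_right _ _, by positivity, ?_⟩
  intro θ hθ0 hθle i j
  have hθu : θ ∈ Set.Ioc (0:ℝ) u := ⟨hθ0, hθle.trans (min_le_left _ _)⟩
  obtain ⟨hθ1, hbd⟩ := hsub hθu
  have hb := hbd i j
  by_cases hij : i = j
  · rw [if_pos hij] at hb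
    have h1 : ‖EG G θ i j‖ ^ 2 ≥ (1/2 : ℝ)^2 := by
      apply pow_le_pow_left₀ (by norm_num) hb
    have h2 : min (ε₀^2/4) (1/4) * θ^2 ≤ 1/4 * 1 := by
      apply mul_le_mul (min_le_right _ _) _ (by positivity) (by norm_num)
      nlinarith
    nlinarith
  · rw [if_neg hij] at hb
    have h1 : (ε₀/2*θ)^2 ≤ ‖EG G θ i j‖ ^ 2 := by
      apply pow_le_pow_left₀ (by positivity) hb
    calc min (ε₀^2/4) (1/4) * θ^2 ≤ ε₀^2/4 * θ^2 := by
          apply mul_le_mul_of_nonneg_right (min_le_left _ _) (by positivity)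
    _ = (ε₀/2*θ)^2 := by ring
    _ ≤ _ := h1


/-- the cumulated angle -/
noncomputable def wsum (ζ : ℝ) (s t : ℕ) : ℝ :=
  ∑ k ∈ Finset.Ioc s t, ((k : ℝ) ^ (-(ζ / 2)))

theorem Uprod_eq (G : Matrix (Fin m) (Fin m) ℂ) (ζ : ℝ)
    (U : ℕ → Matrix (Fin m) (Fin m) ℂ)
    (hU : ∀ n : ℕ, U n =
      NormedSpace.exp ((Complex.I * (((n : ℝ) ^ (-(ζ / 2)) : ℝ) : ℂ)) • G))
    (s : ℕ) : ∀ t, Uprod m U s t = EG G (wsum ζ s t) := by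
  intro t
  induction t with
  | zero =>
    show (1 : Matrix (Fin m) (Fin m) ℂ) = _
    rw [wsum, Finset.Ioc_eq_empty (by omega), Finset.sum_empty, EG_zero]
  | succ t ih =>
    show (if t + 1 ≤ s then 1 else U (t + 1) * Uprod m U s t) = _
    by_cases h : t + 1 ≤ s
    · rw [if_pos h, wsum, Finset.Ioc_eq_empty (by omega), Finset.sum_empty, EG_zero]
    · rw [if_neg h, ih, hU (t + 1)]
      have : NormedSpace.exp ((Complex.I * ((((t+1 : ℕ) : ℝ) ^ (-(ζ / 2)) : ℝ) : ℂ)) • G)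
          = EG G (((t+1 : ℕ) : ℝ) ^ (-(ζ / 2))) := rfl
      rw [this, EG_add]
      congr 1
      rw [wsum, wsum, Finset.sum_Ioc_succ_top (by omega : s ≤ t)]
      ring


section NE
variable [NeZero m]
/-- Row-stochastic with nonnegative entries. -/
def RS (A : Matrix (Fin m) (Fin m) ℝ) : Prop :=
  (∀ i j, 0 ≤ A i j) ∧ (∀ i, ∑ j, A i j = 1)

noncomputable def osc (v : Fin m → ℝ) : ℝ :=
  Finset.univ.sup' Finset.univ_nonempty v - Finset.univ.inf' Finset.univ_nonempty v

noncomputable def minEnt (A : Matrix (Fin m) (Fin m) ℝ) : ℝ :=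
  Finset.univ.inf' Finset.univ_nonempty fun i =>
    Finset.univ.inf' Finset.univ_nonempty fun j => A i j

theorem minEnt_le (A : Matrix (Fin m) (Fin m) ℝ) (i j : Fin m) : minEnt A ≤ A i j :=
  le_trans (Finset.inf'_le _ (Finset.mem_univ i)) (Finset.inf'_le _ (Finset.mem_univ j))

theorem le_minEnt {A : Matrix (Fin m) (Fin m) ℝ} {c : ℝ} (h : ∀ i j, c ≤ A i j) :
    c ≤ minEnt A :=
  Finset.le_inf' _ _ fun i _ => Finset.le_inf' _ _ fun j _ => h i j

theorem inf'_le_sup'_aux (v : Fin m → ℝ) :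
    Finset.univ.inf' Finset.univ_nonempty v ≤ Finset.univ.sup' Finset.univ_nonempty v := by
  have i : Fin m := Classical.arbitrary _
  exact le_trans (Finset.inf'_le _ (Finset.mem_univ i)) (Finset.le_sup' _ (Finset.mem_univ i))

theorem osc_nonneg (v : Fin m → ℝ) : 0 ≤ osc v :=
  sub_nonneg.2 (inf'_le_sup'_aux v)

theorem inf'_le_sup' (v : Fin m → ℝ) :
    Finset.univ.inf' Finset.univ_nonempty v ≤ Finset.univ.sup' Finset.univ_nonempty v := by
  have i : Fin m := Classical.arbitrary _
  exact le_trans (Finset.inf'_le _ (Finset.mem_univ i)) (Finset.le_sup' _ (Finset.mem_univ i))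

theorem factor_nonneg {A : Matrix (Fin m) (Fin m) ℝ} (hA : RS A) :
    0 ≤ 1 - (m : ℝ) * minEnt A := by
  have i : Fin m := Classical.arbitrary _
  have h1 : (m : ℝ) * minEnt A = ∑ _j : Fin m, minEnt A := by
    rw [Finset.sum_const, Finset.card_univ, Fintype.card_fin, nsmul_eq_mul]
  have h2 : ∑ _j : Fin m, minEnt A ≤ ∑ j, A i j :=
    Finset.sum_le_sum fun j _ => minEnt_le A i j
  rw [hA.2 i] at h2
  rw [h1]; linarith

theorem minEnt_nonneg {A : Matrix (Fin m) (Fin m) ℝ} (hA : RS A) : 0 ≤ minEnt A :=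
  le_minEnt fun i j => hA.1 i j

theorem factor_le_one {A : Matrix (Fin m) (Fin m) ℝ} (hA : RS A) :
    1 - (m : ℝ) * minEnt A ≤ 1 := by
  have := minEnt_nonneg hA
  have : (0:ℝ) ≤ (m:ℝ) * minEnt A := by positivity
  linarith

/-- The key contraction estimate for a row-stochastic matrix. -/
theorem osc_mulVec {A : Matrix (Fin m) (Fin m) ℝ} (hA : RS A) (v : Fin m → ℝ) :
    osc (A *ᵥ v) ≤ (1 - (m : ℝ) * minEnt A) * osc v := by
  obtain ⟨i₁, -, hi₁⟩ := Finset.exists_mem_eq_sup' (Finset.univ_nonempty) (A *ᵥ v)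
  obtain ⟨i₂, -, hi₂⟩ := Finset.exists_mem_eq_inf' (Finset.univ_nonempty) (A *ᵥ v)
  set S := Finset.univ.sup' Finset.univ_nonempty v with hS
  set I := Finset.univ.inf' Finset.univ_nonempty v with hI
  set B := fun k => min (A i₁ k) (A i₂ k) with hB
  have hvS : ∀ k, v k ≤ S := fun k => Finset.le_sup' _ (Finset.mem_univ k)
  have hIv : ∀ k, I ≤ v k := fun k => Finset.inf'_le _ (Finset.mem_univ k)
  have hB1 : ∀ k, 0 ≤ A i₁ k - B k := fun k => by
    simp only [hB, sub_nonneg]; exact min_le_left _ _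
  have hB2 : ∀ k, 0 ≤ A i₂ k - B k := fun k => by
    simp only [hB, sub_nonneg]; exact min_le_right _ _
  have hsum1 : ∑ k, (A i₁ k - B k) = 1 - ∑ k, B k := by
    rw [Finset.sum_sub_distrib, hA.2 i₁]
  have hsum2 : ∑ k, (A i₂ k - B k) = 1 - ∑ k, B k := by
    rw [Finset.sum_sub_distrib, hA.2 i₂]
  have hup : (A *ᵥ v) i₁ - (A *ᵥ v) i₂ ≤ (1 - ∑ k, B k) * (S - I) := by
    have e1 : (A *ᵥ v) i₁ = ∑ k, (A i₁ k - B k) * v k + ∑ k, B k * v k := by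
      rw [Matrix.mulVec, dotProduct]
      rw [← Finset.sum_add_distrib]
      congr 1; ext k; ring
    have e2 : (A *ᵥ v) i₂ = ∑ k, (A i₂ k - B k) * v k + ∑ k, B k * v k := by
      rw [Matrix.mulVec, dotProduct]
      rw [← Finset.sum_add_distrib]
      congr 1; ext k; ring
    have b1 : ∑ k, (A i₁ k - B k) * v k ≤ ∑ k, (A i₁ k - B k) * S :=
      Finset.sum_le_sum fun k _ => mul_le_mul_of_nonneg_left (hvS k) (hB1 k)
    have b2 : ∑ k, (A i₂ k - B k) * I ≤ ∑ k, (A i₂ k - B k) * v k :=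
      Finset.sum_le_sum fun k _ => mul_le_mul_of_nonneg_left (hIv k) (hB2 k)
    have c1 : ∑ k, (A i₁ k - B k) * S = (1 - ∑ k, B k) * S := by
      rw [← Finset.sum_mul, hsum1]
    have c2 : ∑ k, (A i₂ k - B k) * I = (1 - ∑ k, B k) * I := by
      rw [← Finset.sum_mul, hsum2]
    rw [e1, e2]
    have := b1.trans_eq c1
    have := c2.symm.trans_le b2
    nlinarith [hvS, hIv]
  have hBge : (m : ℝ) * minEnt A ≤ ∑ k, B k := by
    have : ∀ k, minEnt A ≤ B k := fun k => le_min (minEnt_le A i₁ k) (minEnt_le A i₂ k)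
    calc (m:ℝ) * minEnt A = ∑ _k : Fin m, minEnt A := by
          rw [Finset.sum_const, Finset.card_univ, Fintype.card_fin, nsmul_eq_mul]
    _ ≤ ∑ k, B k := Finset.sum_le_sum fun k _ => this k
  have hoscv : 0 ≤ S - I := sub_nonneg.2 (inf'_le_sup' v)
  have hfin : (1 - ∑ k, B k) * (S - I) ≤ (1 - (m:ℝ) * minEnt A) * (S - I) :=
    mul_le_mul_of_nonneg_right (by linarith) hoscv
  calc osc (A *ᵥ v) = (A *ᵥ v) i₁ - (A *ᵥ v) i₂ := by rw [osc, ← hi₁, ← hi₂]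
  _ ≤ (1 - ∑ k, B k) * (S - I) := hup
  _ ≤ (1 - (m:ℝ) * minEnt A) * (S - I) := hfin
  _ = (1 - (m:ℝ) * minEnt A) * osc v := rfl

theorem osc_list_prod (L : List (Matrix (Fin m) (Fin m) ℝ)) (hL : ∀ A ∈ L, RS A)
    (v : Fin m → ℝ) :
    osc (L.prod *ᵥ v) ≤ (L.map fun A => 1 - (m : ℝ) * minEnt A).prod * osc v := by
  induction L with
  | nil => simp [Matrix.one_mulVec]
  | cons A L ih =>
    have hA := hL A (List.mem_cons_self)
    have hL' : ∀ B ∈ L, RS B := fun B hB => hL B (List.mem_cons_of_mem _ hB)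
    rw [List.prod_cons, List.map_cons, List.prod_cons]
    have e : (A * L.prod) *ᵥ v = A *ᵥ (L.prod *ᵥ v) := by
      rw [Matrix.mulVec_mulVec]
    rw [e, mul_assoc]
    calc osc (A *ᵥ (L.prod *ᵥ v)) ≤ (1 - (m:ℝ) * minEnt A) * osc (L.prod *ᵥ v) :=
          osc_mulVec hA _
    _ ≤ (1 - (m:ℝ) * minEnt A) * ((L.map fun A => 1 - (m : ℝ) * minEnt A).prod * osc v) :=
          mul_le_mul_of_nonneg_left (ih hL') (factor_nonneg hA)

theorem colsum_mul {A B : Matrix (Fin m) (Fin m) ℝ} (hA : ∀ j, ∑ i, A i j = 1)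
    (hB : ∀ j, ∑ i, B i j = 1) (j : Fin m) : ∑ i, (A * B) i j = 1 := by
  simp only [Matrix.mul_apply]
  rw [Finset.sum_comm]
  have : ∀ k, ∑ i, A i k * B k j = B k j := by
    intro k
    rw [← Finset.sum_mul, hA k, one_mul]
  rw [Finset.sum_congr rfl fun k _ => this k, hB j]

theorem colsum_list_prod {L : List (Matrix (Fin m) (Fin m) ℝ)}
    (hL : ∀ A ∈ L, ∀ j, ∑ i, A i j = 1) (j : Fin m) : ∑ i, L.prod i j = 1 := by
  induction L with
  | nil => simp [Matrix.one_apply]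
  | cons A L ih =>
    rw [List.prod_cons]
    have ih' := ih (fun B hB => hL B (List.mem_cons_of_mem _ hB))
    exact colsum_mul (fun j => hL A (List.mem_cons_self) j) (fun j => ih') j

theorem entry_near {v : Fin m → ℝ} (hsum : ∑ i, v i = 1) (i : Fin m) :
    |v i - 1 / (m : ℝ)| ≤ osc v := by
  have hm : (0:ℝ) < m := by
    have := NeZero.pos m; exact_mod_cast this
  set S := Finset.univ.sup' Finset.univ_nonempty v with hS
  set I := Finset.univ.inf' Finset.univ_nonempty v with hI
  have h1 : (m : ℝ) * I ≤ 1 := by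
    calc (m:ℝ) * I = ∑ _k : Fin m, I := by
          rw [Finset.sum_const, Finset.card_univ, Fintype.card_fin, nsmul_eq_mul]
    _ ≤ ∑ k, v k := Finset.sum_le_sum fun k _ => Finset.inf'_le _ (Finset.mem_univ k)
    _ = 1 := hsum
  have h2 : 1 ≤ (m : ℝ) * S := by
    calc (1:ℝ) = ∑ k, v k := hsum.symm
    _ ≤ ∑ _k : Fin m, S := Finset.sum_le_sum fun k _ => Finset.le_sup' _ (Finset.mem_univ k)
    _ = (m:ℝ) * S := by rw [Finset.sum_const, Finset.card_univ, Fintype.card_fin, nsmul_eq_mul]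
  have hIm : I ≤ 1 / (m:ℝ) := by rw [le_div_iff₀ hm]; linarith [mul_comm I (m:ℝ)]
  have hmS : 1 / (m:ℝ) ≤ S := by rw [div_le_iff₀ hm]; linarith [mul_comm S (m:ℝ)]
  have hvi1 : v i ≤ S := Finset.le_sup' _ (Finset.mem_univ i)
  have hvi2 : I ≤ v i := Finset.inf'_le _ (Finset.mem_univ i)
  rw [abs_le]
  constructor <;> (simp only [osc, ← hS, ← hI]; linarith)


theorem list_prod_range {M : Type*} [CommMonoid M] (g : ℕ → M) (N : ℕ) :
    ((List.range N).map g).prod = ∏ k ∈ Finset.range N, g k := by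
  induction N with
  | zero => simp
  | succ N ih =>
    rw [List.range_succ, List.map_append, List.prod_append, Finset.prod_range_succ, ih]
    simp

theorem osc_le_one {v : Fin m → ℝ} (h0 : ∀ i, 0 ≤ v i) (h1 : ∀ i, v i ≤ 1) : osc v ≤ 1 := by
  have hs : Finset.univ.sup' Finset.univ_nonempty v ≤ 1 :=
    Finset.sup'_le _ _ fun i _ => h1 i
  have hi : (0:ℝ) ≤ Finset.univ.inf' Finset.univ_nonempty v :=
    Finset.le_inf' _ _ fun i _ => h0 i
  rw [osc]; linarith

theorem sum_sq_le_sq_sum {ι : Type*} {s : Finset ι} {a : ι → ℝ} (h : ∀ i ∈ s, 0 ≤ a i) :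
    ∑ i ∈ s, (a i) ^ 2 ≤ (∑ i ∈ s, a i) ^ 2 := by
  have hS : ∀ i ∈ s, a i ≤ ∑ j ∈ s, a j := fun i hi => Finset.single_le_sum h hi
  calc ∑ i ∈ s, (a i) ^ 2 ≤ ∑ i ∈ s, a i * (∑ j ∈ s, a j) := by
        apply Finset.sum_le_sum; intro i hi; rw [sq]
        exact mul_le_mul_of_nonneg_left (hS i hi) (h i hi)
  _ = (∑ i ∈ s, a i) ^ 2 := by rw [← Finset.sum_mul, sq]

theorem harm_Ioc_eq (N : ℕ) :
    ∑ k ∈ Finset.Ioc 0 N, ((k:ℝ))⁻¹ = ∑ i ∈ Finset.range N, 1 / ((i:ℝ) + 1) := by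
  induction N with
  | zero => simp
  | succ N ih =>
    rw [Finset.sum_Ioc_succ_top (Nat.zero_le N), Finset.sum_range_succ, ih]
    push_cast
    rw [one_div]

theorem tendsto_harm_Ioc (a : ℕ) :
    Tendsto (fun N => ∑ k ∈ Finset.Ioc a N, ((k:ℝ))⁻¹) atTop atTop := by
  have hH : Tendsto (fun N : ℕ => ∑ k ∈ Finset.Ioc 0 N, ((k:ℝ))⁻¹) atTop atTop := by
    have : (fun N : ℕ => ∑ k ∈ Finset.Ioc 0 N, ((k:ℝ))⁻¹)
        = fun N : ℕ => ∑ i ∈ Finset.range N, 1 / ((i:ℝ) + 1) := funext harm_Ioc_eq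
    rw [this]
    exact Real.tendsto_sum_range_one_div_nat_succ_atTop
  have h2 : Tendsto (fun N : ℕ => (∑ k ∈ Finset.Ioc 0 N, ((k:ℝ))⁻¹)
      + -(∑ k ∈ Finset.Ioc 0 a, ((k:ℝ))⁻¹)) atTop atTop :=
    tendsto_atTop_add_const_right atTop _ hH
  apply h2.congr'
  filter_upwards [eventually_ge_atTop a] with N hN
  rw [← Finset.sum_Ioc_consecutive _ (Nat.zero_le a) hN]
  ring


end NE

end Stmt14Helper

section Prob

variable {Ω : Type*} [MeasureSpace Ω] [IsProbabilityMeasure (ℙ : Measure Ω)]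

set_option maxHeartbeats 1000000 in
theorem T_ae_pos (T : ℕ → Ω → ℕ) (hTmeas : ∀ n, Measurable (T n))
    {p : ℝ} (hp0 : 0 < p) (hp1 : p ≤ 1)
    (hTgeom : ∀ n k, 1 ≤ k →
      (ℙ {ω | T n ω = k} : ENNReal) = ENNReal.ofReal (p * (1 - p) ^ (k - 1))) :
    ∀ᵐ ω ∂(ℙ : Measure Ω), ∀ n, 1 ≤ T n ω := by
  rw [MeasureTheory.ae_all_iff]
  intro n
  -- show ℙ {ω | T n ω = 0} = 0
  have hmeas : ∀ k : ℕ, MeasurableSet {ω | T n ω = k} := fun k =>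
    hTmeas n (measurableSet_singleton k)
  have hdisj : Pairwise (Function.onFun Disjoint fun k : ℕ => {ω | T n ω = k}) := by
    intro a b hab
    simp only [Function.onFun, Set.disjoint_left]
    rintro ω (h1 : T n ω = a) (h2 : T n ω = b)
    exact hab (h1 ▸ h2 ▸ rfl)
  have huniv : (Set.univ : Set Ω) = ⋃ k : ℕ, {ω | T n ω = k} := by
    ext ω; simp
  have h1 : (1 : ENNReal) = ∑' k : ℕ, ℙ {ω | T n ω = k} := by
    conv_lhs => rw [← measure_univ (μ := (ℙ : Measure Ω)), huniv]
    exact measure_iUnion hdisj hmeas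
  have hgeo : ∑' k : ℕ, ℙ {ω | T n ω = (k + 1)} = 1 := by
    have : ∀ k : ℕ, ℙ {ω | T n ω = (k + 1)} = ENNReal.ofReal (p * (1 - p) ^ k) := by
      intro k
      rw [hTgeom n (k+1) (by omega)]
      norm_num
    rw [tsum_congr this]
    rw [← ENNReal.ofReal_tsum_of_nonneg]
    · rw [tsum_mul_left, tsum_geometric_of_lt_one (by linarith) (by linarith)]
      rw [show (1 : ℝ) - (1 - p) = p by ring]
      rw [mul_inv_cancel₀ hp0.ne']
      simp
    · intro k; have h2 : (0:ℝ) ≤ 1 - p := by linarith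
      positivity
    · apply Summable.mul_left
      exact summable_geometric_of_lt_one (by linarith) (by linarith)
  have hsplit : ∑' k : ℕ, ℙ {ω | T n ω = k}
      = ℙ {ω | T n ω = 0} + ∑' k : ℕ, ℙ {ω | T n ω = (k + 1)} :=
    tsum_eq_zero_add' ENNReal.summable
  rw [hsplit, hgeo] at h1
  have : ℙ {ω | T n ω = 0} = 0 := by
    have h2 : ℙ {ω | T n ω = 0} + 1 = 0 + 1 := by rw [← h1]; ring
    exact WithTop.add_right_cancel ENNReal.one_ne_top h2
  filter_upwards [MeasureTheory.measure_eq_zero_iff_ae_notMem.1 this] with ω hω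
  simpa [Nat.one_le_iff_ne_zero] using hω

theorem T_tail (T : ℕ → Ω → ℕ) (hTmeas : ∀ n, Measurable (T n))
    {p : ℝ} (hp0 : 0 < p) (hp1 : p ≤ 1)
    (hTgeom : ∀ n k, 1 ≤ k →
      (ℙ {ω | T n ω = k} : ENNReal) = ENNReal.ofReal (p * (1 - p) ^ (k - 1)))
    (n K : ℕ) (hK : 1 ≤ K) :
    ℙ {ω | K ≤ T n ω} ≤ ENNReal.ofReal ((1 - p) ^ (K - 1)) := by
  have hsub : {ω | K ≤ T n ω} ⊆ ⋃ j : ℕ, {ω | T n ω = K + j} := by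
    intro ω hω
    simp only [Set.mem_setOf_eq] at hω
    simp only [Set.mem_iUnion, Set.mem_setOf_eq]
    exact ⟨T n ω - K, by omega⟩
  calc ℙ {ω | K ≤ T n ω} ≤ ℙ (⋃ j : ℕ, {ω | T n ω = K + j}) := measure_mono hsub
  _ ≤ ∑' j : ℕ, ℙ {ω | T n ω = K + j} := measure_iUnion_le _
  _ = ∑' j : ℕ, ENNReal.ofReal ((p * (1-p) ^ (K-1)) * (1-p) ^ j) := by
      apply tsum_congr; intro j
      rw [hTgeom n (K + j) (by omega)]
      congr 1
      rw [show K + j - 1 = (K - 1) + j by omega, pow_add]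
      ring
  _ = ENNReal.ofReal ((1 - p) ^ (K - 1)) := by
      rw [← ENNReal.ofReal_tsum_of_nonneg]
      · rw [tsum_mul_left, tsum_geometric_of_lt_one (by linarith) (by linarith)]
        rw [show (1 : ℝ) - (1 - p) = p by ring]
        congr 1
        field_simp
      · intro j; have h2 : (0:ℝ) ≤ 1 - p := by linarith
        positivity
      · exact Summable.mul_left _ (summable_geometric_of_lt_one (by linarith) (by linarith))

theorem summable_pow_floor {r θ₀ δ : ℝ} (hr0 : 0 ≤ r) (hr1 : r < 1) (hθ₀ : 0 < θ₀)
    (hδ : 0 < δ) : Summable (fun n : ℕ => r ^ (⌊θ₀ * (n : ℝ) ^ δ⌋₊)) := by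
  set r' := max r (1/2) with hr'
  have hr'0 : (0:ℝ) < r' := lt_of_lt_of_le (by norm_num) (le_max_right _ _)
  have hr'1 : r' < 1 := max_lt hr1 (by norm_num)
  have hle : ∀ n : ℕ, r ^ (⌊θ₀ * (n : ℝ) ^ δ⌋₊) ≤ r' ^ (⌊θ₀ * (n : ℝ) ^ δ⌋₊) :=
    fun n => pow_le_pow_left₀ hr0 (le_max_left _ _) _
  have main : Summable (fun n : ℕ => r' ^ (⌊θ₀ * (n : ℝ) ^ δ⌋₊)) := by
    have hlog : Real.log r' < 0 := Real.log_neg hr'0 hr'1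
    set b := -Real.log r' with hbdef
    have hbpos : 0 < b := by simp [hbdef]; linarith
    -- eventual bound
    have hev : ∀ᶠ n : ℕ in atTop, r' ^ (⌊θ₀ * (n : ℝ) ^ δ⌋₊) ≤ (n:ℝ) ^ (-2 : ℝ) := by
      have hlo := (isLittleO_log_rpow_atTop hδ).def
        (by positivity : (0:ℝ) < θ₀ * b / 4)
      have h1 : ∀ᶠ x : ℝ in atTop, ‖Real.log x‖ ≤ θ₀ * b / 4 * ‖x ^ δ‖ := hlo
      have h2 : ∀ᶠ n : ℕ in atTop, ‖Real.log (n:ℝ)‖ ≤ θ₀ * b / 4 * ‖(n:ℝ) ^ δ‖ :=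
        tendsto_natCast_atTop_atTop.eventually h1
      have h3 : ∀ᶠ n : ℕ in atTop, 2 / θ₀ ≤ (n:ℝ) ^ δ :=
        ((tendsto_rpow_atTop hδ).comp tendsto_natCast_atTop_atTop).eventually_ge_atTop _
      have h4 : ∀ᶠ n : ℕ in atTop, 1 ≤ n := eventually_ge_atTop 1
      filter_upwards [h2, h3, h4] with n hn2 hn3 hn4
      have hn1 : (1:ℝ) ≤ (n:ℝ) := by exact_mod_cast hn4
      have hnpos : (0:ℝ) < (n:ℝ) := by linarith
      have hrpow_nonneg : (0:ℝ) ≤ (n:ℝ) ^ δ := Real.rpow_nonneg hnpos.le δ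
      have hlogn : 0 ≤ Real.log (n:ℝ) := Real.log_nonneg hn1
      rw [Real.norm_eq_abs, Real.norm_eq_abs, abs_of_nonneg hlogn,
        abs_of_nonneg hrpow_nonneg] at hn2
      -- key exponent inequality: 2 * log n ≤ b * ⌊θ₀ n^δ⌋₊
      have hfloor : θ₀ * (n:ℝ) ^ δ - 1 ≤ (⌊θ₀ * (n : ℝ) ^ δ⌋₊ : ℝ) := by
        have := Nat.sub_one_lt_floor (θ₀ * (n:ℝ) ^ δ)
        linarith
      have hkey : 2 * Real.log (n:ℝ) ≤ b * (⌊θ₀ * (n : ℝ) ^ δ⌋₊ : ℝ) := by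
        have e1 : 2 * Real.log (n:ℝ) ≤ θ₀ * b / 2 * (n:ℝ) ^ δ := by nlinarith
        have e2 : θ₀ * b / 2 * (n:ℝ) ^ δ ≤ b * (θ₀ * (n:ℝ) ^ δ - 1) := by
          have e3 : 2 / θ₀ * θ₀ ≤ (n:ℝ) ^ δ * θ₀ :=
            mul_le_mul_of_nonneg_right hn3 hθ₀.le
          rw [div_mul_cancel₀ _ hθ₀.ne'] at e3
          nlinarith
        have e4 : b * (θ₀ * (n:ℝ) ^ δ - 1) ≤ b * (⌊θ₀ * (n : ℝ) ^ δ⌋₊ : ℝ) :=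
          mul_le_mul_of_nonneg_left hfloor hbpos.le
        exact le_trans (le_trans e1 e2) e4
      -- convert to exp form
      have hform : r' ^ (⌊θ₀ * (n : ℝ) ^ δ⌋₊) =
          Real.exp ((⌊θ₀ * (n : ℝ) ^ δ⌋₊ : ℝ) * Real.log r') := by
        rw [Real.exp_nat_mul, Real.exp_log hr'0]
      have hform2 : (n:ℝ) ^ (-2:ℝ) = Real.exp (Real.log (n:ℝ) * (-2)) := by
        rw [Real.rpow_def_of_pos hnpos]
      rw [hform, hform2]
      apply Real.exp_le_exp.2
      have : (⌊θ₀ * (n : ℝ) ^ δ⌋₊ : ℝ) * Real.log r'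
          = -(b * (⌊θ₀ * (n : ℝ) ^ δ⌋₊ : ℝ)) := by rw [hbdef]; ring
      rw [this]
      linarith
    apply summable_of_isBigO_nat (g := fun n => (n:ℝ) ^ (-2:ℝ))
      (Real.summable_nat_rpow.2 (by norm_num))
    apply Asymptotics.IsBigO.of_bound 1
    filter_upwards [hev] with n hn
    rw [one_mul, Real.norm_eq_abs, Real.norm_eq_abs,
      abs_of_nonneg (by positivity : (0:ℝ) ≤ r' ^ _),
      abs_of_nonneg (Real.rpow_nonneg (Nat.cast_nonneg n) _)]
    exact hn
  exact Summable.of_nonneg_of_le (fun n => by positivity) hle main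

end Prob

/-- almost sure ergodicity including the boundary factor: with
`U_n = exp(i n^{−ζ/2} G)`, `|G_{ij}| ≥ ε₀ > 0`, `0 < ζ ≤ 1`, `0 < p ≤ 1`, for every
`s ≥ 0` the random product `Q_{σ_s} Q_{σ_{s+1}} ⋯ Q_{σ_{n_t−1}} W_{σ_{n_t}}` converges
a.s. as `t → ∞` to the matrix `Π` with all entries `1/m`. -/
theorem stmt14 (m : ℕ) (G : Matrix (Fin m) (Fin m) ℂ) (hG : G.IsHermitian)
    (ε₀ : ℝ) (hε₀ : 0 < ε₀) (hGlow : ∀ i j, ε₀ ≤ ‖G i j‖)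
    (ζ : ℝ) (hζ0 : 0 < ζ) (hζ1 : ζ ≤ 1)
    (p : ℝ) (hp0 : 0 < p) (hp1 : p ≤ 1)
    (U : ℕ → Matrix (Fin m) (Fin m) ℂ)
    (hU : ∀ n : ℕ, U n =
      NormedSpace.exp ((Complex.I * (((n : ℝ) ^ (-(ζ / 2)) : ℝ) : ℂ)) • G))
    {Ω : Type*} [MeasureSpace Ω] [IsProbabilityMeasure (ℙ : Measure Ω)]
    (T : ℕ → Ω → ℕ) (hTmeas : ∀ n, Measurable (T n))
    (hTindep : iIndepFun T ℙ)
    (hTgeom : ∀ n k, 1 ≤ k →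
      (ℙ {ω | T n ω = k} : ENNReal) = ENNReal.ofReal (p * (1 - p) ^ (k - 1)))
    (s : ℕ) :
    ∀ᵐ ω ∂(ℙ : Measure Ω),
      Tendsto (fun t =>
          (((List.range (ntT T t ω - s)).map (fun k => Qmat m U T (s + k) ω)).prod *
            Wmat m U T t ω))
        atTop (nhds (Matrix.of fun _ _ : Fin m => (1 : ℝ) / m)) := by
  classical
  rcases Nat.eq_zero_or_pos m with hm0 | hmpos
  · subst hm0
    refine Filter.Eventually.of_forall fun ω => ?_
    haveI hss : Subsingleton (Matrix (Fin 0) (Fin 0) ℝ) :=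
      ⟨fun a b => funext fun i => i.elim0⟩
    have heq : (fun t => (((List.range (ntT T t ω - s)).map
          (fun k => Qmat 0 U T (s + k) ω)).prod * Wmat 0 U T t ω))
        = fun _ => (Matrix.of fun _ _ : Fin 0 => (1 : ℝ) / ((0:ℕ):ℝ)) :=
      funext fun t => Subsingleton.elim _ _
    rw [heq]
    exact tendsto_const_nhds (α := ℕ) (x := Matrix.of fun _ _ : Fin 0 => (1 : ℝ) / ((0:ℕ):ℝ))
  haveI : NeZero m := ⟨hmpos.ne'⟩
  obtain ⟨θ₀, c, hθ₀pos, hθ₀le1, hcpos, hlow⟩ := Stmt14Helper.exists_entry_lower G hε₀ hGlow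
  -- the two a.e. events
  have h1 := T_ae_pos T hTmeas hp0 hp1 hTgeom
  have h2 : ∀ᵐ ω ∂(ℙ : Measure Ω), ∀ᶠ n in atTop,
      (T n ω : ℝ) ≤ θ₀ * (n : ℝ) ^ (ζ / 2) := by
    have hsum : (∑' n : ℕ, ℙ {ω | ⌊θ₀ * (n : ℝ) ^ (ζ/2)⌋₊ + 1 ≤ T n ω}) ≠ ⊤ := by
      have hbd : ∀ n : ℕ, ℙ {ω | ⌊θ₀ * (n : ℝ) ^ (ζ/2)⌋₊ + 1 ≤ T n ω}
          ≤ ENNReal.ofReal ((1 - p) ^ (⌊θ₀ * (n : ℝ) ^ (ζ/2)⌋₊)) := by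
        intro n
        have := T_tail T hTmeas hp0 hp1 hTgeom n (⌊θ₀ * (n : ℝ) ^ (ζ/2)⌋₊ + 1) (by omega)
        simpa using this
      have hsummable : Summable (fun n : ℕ => (1 - p) ^ (⌊θ₀ * (n : ℝ) ^ (ζ/2)⌋₊)) :=
        summable_pow_floor (by linarith) (by linarith) hθ₀pos (by linarith)
      have hNN : ∀ n : ℕ, 0 ≤ (1 - p) ^ (⌊θ₀ * (n : ℝ) ^ (ζ/2)⌋₊) := by
        intro n; have : (0:ℝ) ≤ 1 - p := by linarith
        positivity
      have h3 : (∑' n : ℕ, ENNReal.ofReal ((1 - p) ^ (⌊θ₀ * (n : ℝ) ^ (ζ/2)⌋₊))) ≠ ⊤ := by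
        rw [← ENNReal.ofReal_tsum_of_nonneg hNN hsummable]
        exact ENNReal.ofReal_ne_top
      exact ne_top_of_le_ne_top h3 (ENNReal.tsum_le_tsum hbd)
    have hBC := MeasureTheory.ae_eventually_notMem hsum
    filter_upwards [hBC] with ω hω
    filter_upwards [hω] with n hn
    have hn' : T n ω ≤ ⌊θ₀ * (n : ℝ) ^ (ζ/2)⌋₊ := by
      simp only [Set.mem_setOf_eq, not_le] at hn
      omega
    have h4 : (0:ℝ) ≤ θ₀ * (n : ℝ) ^ (ζ/2) := by positivity
    exact le_trans (by exact_mod_cast hn') (Nat.floor_le h4)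
  filter_upwards [h1, h2] with ω hω1 hω2
  ------------------------------------------------------------------
  -- deterministic part
  ------------------------------------------------------------------
  have hσsucc : ∀ n, sigmaT T (n+1) ω = sigmaT T n ω + T n ω := fun n =>
    Finset.sum_range_succ _ n
  have hσlt : ∀ n, sigmaT T n ω < sigmaT T (n+1) ω := by
    intro n; have := hω1 n; rw [hσsucc n]; omega
  have hσge : ∀ n, n ≤ sigmaT T n ω := by
    intro n
    induction n with
    | zero => exact Nat.zero_le _
    | succ n ih => have := hσlt n; omega
  have hσmono : Monotone (fun n => sigmaT T n ω) :=
    monotone_nat_of_le_succ fun n => (hσlt n).le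
  set θQ : ℕ → ℝ := fun n => Stmt14Helper.wsum ζ (sigmaT T n ω) (sigmaT T (n+1) ω)
    with hθQdef
  have hQeq : ∀ n, Qmat m U T n ω = Stmt14Helper.QE G (θQ n) := by
    intro n
    simp only [Qmat, Stmt14Helper.QE, hθQdef,
      Stmt14Helper.Uprod_eq G ζ U hU (sigmaT T n ω) (sigmaT T (n+1) ω)]
  have hWeq : ∀ t, Wmat m U T t ω
      = Stmt14Helper.QE G (Stmt14Helper.wsum ζ (sigmaT T (ntT T t ω) ω) t) := by
    intro t
    simp only [Wmat, Stmt14Helper.QE,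
      Stmt14Helper.Uprod_eq G ζ U hU (sigmaT T (ntT T t ω) ω) t]
  have hRS : ∀ θ, Stmt14Helper.RS (Stmt14Helper.QE G θ) := fun θ =>
    ⟨Stmt14Helper.QE_nonneg G θ, Stmt14Helper.QE_row_sum hG θ⟩
  -- n_t → ∞
  have hntge : ∀ n t, sigmaT T n ω ≤ t → n ≤ ntT T t ω := fun n t h =>
    Nat.le_findGreatest ((hσge n).trans h) h
  have hnt_tendsto : Tendsto (fun t => ntT T t ω) atTop atTop := by
    apply tendsto_atTop_atTop.2
    intro b
    exact ⟨sigmaT T b ω, fun t ht => hntge b t ht⟩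
  -- positivity of θQ
  have hθQpos : ∀ n, 0 < θQ n := by
    intro n
    apply Finset.sum_pos
    · intro k hk
      rw [Finset.mem_Ioc] at hk
      have hk0 : 0 < k := by omega
      exact Real.rpow_pos_of_pos (by exact_mod_cast hk0) _
    · exact Finset.nonempty_Ioc.2 (hσlt n)
  -- eventual smallness of θQ
  have hθQsmall : ∀ᶠ n in atTop, θQ n ≤ θ₀ := by
    filter_upwards [hω2, eventually_ge_atTop 1] with n hn hn1
    have hnpos : (0:ℝ) < (n:ℝ) := by exact_mod_cast hn1
    have hcard : (Finset.Ioc (sigmaT T n ω) (sigmaT T (n+1) ω)).card = T n ω := by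
      rw [Nat.card_Ioc, hσsucc n]; omega
    have hterm : ∀ k ∈ Finset.Ioc (sigmaT T n ω) (sigmaT T (n+1) ω),
        (k:ℝ) ^ (-(ζ/2)) ≤ (n:ℝ) ^ (-(ζ/2)) := by
      intro k hk
      rw [Finset.mem_Ioc] at hk
      have hkn : (n:ℝ) ≤ (k:ℝ) := by
        have : n ≤ k := le_trans (hσge n) (le_of_lt hk.1)
        exact_mod_cast this
      exact Real.rpow_le_rpow_of_nonpos hnpos hkn (by linarith)
    calc θQ n ≤ (Finset.Ioc (sigmaT T n ω) (sigmaT T (n+1) ω)).card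
          • ((n:ℝ) ^ (-(ζ/2))) := Finset.sum_le_card_nsmul _ _ _ hterm
    _ = (T n ω : ℝ) * (n:ℝ) ^ (-(ζ/2)) := by rw [hcard, nsmul_eq_mul]
    _ ≤ (θ₀ * (n:ℝ) ^ (ζ/2)) * (n:ℝ) ^ (-(ζ/2)) :=
        mul_le_mul_of_nonneg_right hn (Real.rpow_nonneg hnpos.le _)
    _ = θ₀ := by
        rw [mul_assoc, ← Real.rpow_add hnpos, add_neg_cancel, Real.rpow_zero, mul_one]
  obtain ⟨N', hN'⟩ := eventually_atTop.1 hθQsmall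
  set N₀ := max (max N' s) 1 with hN₀def
  have hsN₀ : s ≤ N₀ := le_max_of_le_left (le_max_right _ _)
  have h1N₀ : 1 ≤ N₀ := le_max_right _ _
  have hθQN₀ : ∀ n, N₀ ≤ n → θQ n ≤ θ₀ := fun n hn =>
    hN' n (le_trans (le_max_of_le_left (le_max_left _ _)) hn)
  have hminEnt : ∀ n, N₀ ≤ n →
      c * θQ n ^ 2 ≤ Stmt14Helper.minEnt (Stmt14Helper.QE G (θQ n)) := by
    intro n hn
    apply Stmt14Helper.le_minEnt
    intro i j
    exact hlow (θQ n) (hθQpos n) (hθQN₀ n hn) j i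
  set Fq : ℕ → ℝ := fun n => 1 - (m:ℝ) * Stmt14Helper.minEnt (Stmt14Helper.QE G (θQ n))
    with hFqdef
  set B : ℕ → ℝ := fun N => ∏ n ∈ Finset.Ico s N, Fq n with hBdef
  have hFq0 : ∀ n, 0 ≤ Fq n := fun n => Stmt14Helper.factor_nonneg (hRS (θQ n))
  have hFq1 : ∀ n, Fq n ≤ 1 := fun n => Stmt14Helper.factor_le_one (hRS (θQ n))
  have hB0 : ∀ N, 0 ≤ B N := fun N => Finset.prod_nonneg fun n _ => hFq0 n
  ------------------------------------------------------------------
  -- the entrywise bound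
  ------------------------------------------------------------------
  have hbound : ∀ (t : ℕ) (i j : Fin m),
      |(((List.range (ntT T t ω - s)).map (fun k => Qmat m U T (s + k) ω)).prod *
            Wmat m U T t ω) i j - 1/(m:ℝ)| ≤ B (ntT T t ω) := by
    intro t i j
    set L := (List.range (ntT T t ω - s)).map (fun k => Qmat m U T (s + k) ω) with hLdef
    set Wt := Wmat m U T t ω with hWdef2
    have hLRS : ∀ A ∈ L, Stmt14Helper.RS A := by
      intro A hA
      rw [hLdef, List.mem_map] at hA
      obtain ⟨k, -, rfl⟩ := hA
      rw [hQeq]; exact hRS _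
    have hWRS : Stmt14Helper.RS Wt := by rw [hWdef2, hWeq]; exact hRS _
    have hcolL : ∀ j', ∑ i', L.prod i' j' = 1 := by
      intro j'
      apply Stmt14Helper.colsum_list_prod
      intro A hA j''
      rw [hLdef, List.mem_map] at hA
      obtain ⟨k, -, rfl⟩ := hA
      rw [hQeq]; exact Stmt14Helper.QE_col_sum hG _ j''
    have hcolW : ∀ j', ∑ i', Wt i' j' = 1 := by
      intro j'; rw [hWdef2, hWeq]; exact Stmt14Helper.QE_col_sum hG _ j'
    have hcolM : ∑ i', (L.prod * Wt) i' j = 1 :=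
      Stmt14Helper.colsum_mul hcolL hcolW j
    have hMcol : (fun i' => (L.prod * Wt) i' j) = (L.prod *ᵥ fun k => Wt k j) := by
      funext i'
      rw [Matrix.mul_apply]
      rfl
    have hW01 : ∀ i', 0 ≤ Wt i' j ∧ Wt i' j ≤ 1 := by
      intro i'
      constructor
      · exact hWRS.1 i' j
      · have hrow := hWRS.2 i'
        have := Finset.single_le_sum (f := fun j' => Wt i' j')
          (fun j' _ => hWRS.1 i' j') (Finset.mem_univ j)
        linarith
    have hoscW : Stmt14Helper.osc (fun k => Wt k j) ≤ 1 :=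
      Stmt14Helper.osc_le_one (fun i' => (hW01 i').1) (fun i' => (hW01 i').2)
    have hprods : (L.map fun A => 1 - (m:ℝ) * Stmt14Helper.minEnt A).prod
        = B (ntT T t ω) := by
      rw [hLdef, List.map_map, Stmt14Helper.list_prod_range]
      simp only [hBdef]
      rw [Finset.prod_Ico_eq_prod_range]
      apply Finset.prod_congr rfl
      intro k _
      simp only [Function.comp_apply, hFqdef, hQeq]
    have hosc : Stmt14Helper.osc (fun i' => (L.prod * Wt) i' j) ≤ B (ntT T t ω) := by
      rw [hMcol]
      have h3 := Stmt14Helper.osc_list_prod L hLRS (fun k => Wt k j)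
      rw [hprods] at h3
      calc Stmt14Helper.osc (L.prod *ᵥ fun k => Wt k j)
          ≤ B (ntT T t ω) * Stmt14Helper.osc (fun k => Wt k j) := h3
      _ ≤ B (ntT T t ω) * 1 := mul_le_mul_of_nonneg_left hoscW (hB0 _)
      _ = B (ntT T t ω) := mul_one _
    exact le_trans (Stmt14Helper.entry_near hcolM i) hosc
  ------------------------------------------------------------------
  -- B tends to zero
  ------------------------------------------------------------------
  have hBtend : Tendsto B atTop (nhds 0) := by
    have hgeq : ∀ n, N₀ ≤ n → Fq n ≤ Real.exp (-((m:ℝ) * c * θQ n ^ 2)) := by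
      intro n hn
      have ha := hminEnt n hn
      have hb : Fq n ≤ 1 - (m:ℝ) * (c * θQ n ^ 2) := by
        rw [hFqdef]
        have := mul_le_mul_of_nonneg_left ha (by positivity : (0:ℝ) ≤ (m:ℝ))
        simp only [sub_le_sub_iff_left]
        exact this
      have hc : 1 - (m:ℝ) * (c * θQ n ^ 2) ≤ Real.exp (-((m:ℝ) * c * θQ n ^ 2)) := by
        have := Real.add_one_le_exp (-((m:ℝ) * c * θQ n ^ 2))
        have he : (m:ℝ) * (c * θQ n ^ 2) = (m:ℝ) * c * θQ n ^ 2 := by ring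
        linarith
      linarith
    have hBle : ∀ N, N₀ ≤ N →
        B N ≤ Real.exp (-(∑ n ∈ Finset.Ico N₀ N, (m:ℝ) * c * θQ n ^ 2)) := by
      intro N hN
      simp only [hBdef]
      rw [← Finset.prod_Ico_consecutive _ hsN₀ hN]
      calc (∏ n ∈ Finset.Ico s N₀, Fq n) * ∏ n ∈ Finset.Ico N₀ N, Fq n
          ≤ 1 * ∏ n ∈ Finset.Ico N₀ N, Fq n := by
            apply mul_le_mul_of_nonneg_right
              (Finset.prod_le_one (fun n _ => hFq0 n) (fun n _ => hFq1 n))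
              (Finset.prod_nonneg fun n _ => hFq0 n)
      _ = ∏ n ∈ Finset.Ico N₀ N, Fq n := one_mul _
      _ ≤ ∏ n ∈ Finset.Ico N₀ N, Real.exp (-((m:ℝ) * c * θQ n ^ 2)) :=
          Finset.prod_le_prod (fun n _ => hFq0 n)
            (fun n hn => hgeq n (Finset.mem_Ico.1 hn).1)
      _ = Real.exp (-(∑ n ∈ Finset.Ico N₀ N, (m:ℝ) * c * θQ n ^ 2)) := by
          rw [← Real.exp_sum, ← Finset.sum_neg_distrib]
    have hSdiv : Tendsto (fun N => ∑ n ∈ Finset.Ico N₀ N, (m:ℝ) * c * θQ n ^ 2)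
        atTop atTop := by
      have hsq : ∀ n, ∑ k ∈ Finset.Ioc (sigmaT T n ω) (sigmaT T (n+1) ω), (k:ℝ) ^ (-ζ)
          ≤ θQ n ^ 2 := by
        intro n
        have h1 := Stmt14Helper.sum_sq_le_sq_sum
          (s := Finset.Ioc (sigmaT T n ω) (sigmaT T (n+1) ω))
          (a := fun k => ((k:ℕ):ℝ) ^ (-(ζ/2)))
          (fun k hk => by
            rw [Finset.mem_Ioc] at hk
            have hk0 : 0 < k := by omega
            positivity)
        have h2 : ∀ k ∈ Finset.Ioc (sigmaT T n ω) (sigmaT T (n+1) ω),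
            (((k:ℕ):ℝ) ^ (-(ζ/2))) ^ 2 = (k:ℝ) ^ (-ζ) := by
          intro k hk
          rw [Finset.mem_Ioc] at hk
          have hk0 : (0:ℝ) < (k:ℝ) := by exact_mod_cast (by omega : 0 < k)
          rw [sq, ← Real.rpow_add hk0]
          congr 1
          ring
        rw [← Finset.sum_congr rfl h2]
        exact h1
      have hblocks : ∀ N, N₀ ≤ N →
          ∑ n ∈ Finset.Ico N₀ N,
            (∑ k ∈ Finset.Ioc (sigmaT T n ω) (sigmaT T (n+1) ω), (k:ℝ) ^ (-ζ))
          = ∑ k ∈ Finset.Ioc (sigmaT T N₀ ω) (sigmaT T N ω), (k:ℝ) ^ (-ζ) := by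
        intro N hN
        induction N, hN using Nat.le_induction with
        | base => simp
        | succ N hN ih =>
          rw [Finset.sum_Ico_succ_top hN, ih,
            Finset.sum_Ioc_consecutive _ (hσmono hN) (hσlt N).le]
      have hharm : ∀ k : ℕ, 1 ≤ k → (k:ℝ)⁻¹ ≤ (k:ℝ) ^ (-ζ) := by
        intro k hk
        rw [← Real.rpow_neg_one]
        exact Real.rpow_le_rpow_of_exponent_le (by exact_mod_cast hk) (by linarith)
      have hlower : ∀ᶠ N in atTop,
          (m:ℝ) * c * (∑ k ∈ Finset.Ioc (sigmaT T N₀ ω) N, (k:ℝ)⁻¹)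
          ≤ ∑ n ∈ Finset.Ico N₀ N, (m:ℝ) * c * θQ n ^ 2 := by
        filter_upwards [eventually_ge_atTop N₀] with N hN
        rw [← Finset.mul_sum]
        apply mul_le_mul_of_nonneg_left _ (by positivity)
        calc ∑ k ∈ Finset.Ioc (sigmaT T N₀ ω) N, (k:ℝ)⁻¹
            ≤ ∑ k ∈ Finset.Ioc (sigmaT T N₀ ω) N, (k:ℝ) ^ (-ζ) := by
              apply Finset.sum_le_sum
              intro k hk
              rw [Finset.mem_Ioc] at hk
              exact hharm k (by have := hσge N₀; omega)
        _ ≤ ∑ k ∈ Finset.Ioc (sigmaT T N₀ ω) (sigmaT T N ω), (k:ℝ) ^ (-ζ) := by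
              apply Finset.sum_le_sum_of_subset_of_nonneg
              · exact Finset.Ioc_subset_Ioc_right (hσge N)
              · intro k _ _
                positivity
        _ = ∑ n ∈ Finset.Ico N₀ N,
              (∑ k ∈ Finset.Ioc (sigmaT T n ω) (sigmaT T (n+1) ω), (k:ℝ) ^ (-ζ)) :=
              (hblocks N hN).symm
        _ ≤ ∑ n ∈ Finset.Ico N₀ N, θQ n ^ 2 := Finset.sum_le_sum fun n _ => hsq n
      have hdiv2 : Tendsto (fun N : ℕ =>
          (m:ℝ) * c * (∑ k ∈ Finset.Ioc (sigmaT T N₀ ω) N, (k:ℝ)⁻¹)) atTop atTop := by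
        apply Tendsto.const_mul_atTop (by positivity : (0:ℝ) < (m:ℝ) * c)
        exact Stmt14Helper.tendsto_harm_Ioc _
      exact tendsto_atTop_mono' _ hlower hdiv2
    have hexp : Tendsto
        (fun N => Real.exp (-(∑ n ∈ Finset.Ico N₀ N, (m:ℝ) * c * θQ n ^ 2)))
        atTop (nhds 0) :=
      Real.tendsto_exp_atBot.comp (tendsto_neg_atTop_atBot.comp hSdiv)
    apply tendsto_of_tendsto_of_tendsto_of_le_of_le' tendsto_const_nhds hexp
    · exact Filter.Eventually.of_forall hB0
    · filter_upwards [eventually_ge_atTop N₀] with N hN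
      exact hBle N hN
  ------------------------------------------------------------------
  -- final squeeze
  ------------------------------------------------------------------
  have hcomp : Tendsto (fun t => B (ntT T t ω)) atTop (nhds 0) :=
    hBtend.comp hnt_tendsto
  have hfinal : ∀ i j : Fin m, Tendsto (fun t =>
      (((List.range (ntT T t ω - s)).map (fun k => Qmat m U T (s + k) ω)).prod *
        Wmat m U T t ω) i j) atTop (nhds ((1:ℝ)/(m:ℝ))) := by
    intro i j
    have hsqz : Tendsto (fun t =>
        (((List.range (ntT T t ω - s)).map (fun k => Qmat m U T (s + k) ω)).prod *
          Wmat m U T t ω) i j - 1/(m:ℝ)) atTop (nhds 0) :=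
      squeeze_zero_norm (fun t => by
        rw [Real.norm_eq_abs]; exact hbound t i j) hcomp
    have := hsqz.add_const ((1:ℝ)/(m:ℝ))
    simpa using this
  refine tendsto_pi_nhds.2 fun i => tendsto_pi_nhds.2 fun j => ?_
  simpa [Matrix.of_apply] using hfinal i j
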